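/- arXiv:1611.10299 — 3 statements merged into one kernel-verified Lean document; each statement's English description precedes it below -/
import Mathlib

section
/- Let n ∈ ℕ, let p > 0 and ε > 0, and let G be a graph on n vertices such that 2 e_G(U) < p|U|² + ε p n |U| for every non-empty subset U ⊆ V(G), where e_G(U) denotes the number of edges of G with both endpoints in U. Then every non-empty subgraph H ⊆ G with minimum degree δ(H) ≥ (1/2 + ε)pn is connected; moreover, every connected component of such an H has more than n/2 vertices. -/
open MeasureTheory Filter Topology SimpleGraph

namespace MonochromaticTrees

variable {V : Type*} {C : Type*}

/-- A subgraph `T` of `G` is a *monochromatic tree* with respect to the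
edge-colouring `φ` if it is either empty or a tree, and all of its edges
receive the same colour under `φ`. -/
def IsMonoTree (G : SimpleGraph V) (φ : Sym2 V → C) (T : G.Subgraph) : Prop :=
  (T.verts = ∅ ∨ T.coe.IsTree) ∧ ∃ c : C, ∀ e ∈ T.edgeSet, φ e = c

/-- `φ → Π₂`: the vertex set can be partitioned into the vertex sets of two
monochromatic trees. -/
def MonoTreePartition2 (G : SimpleGraph V) (φ : Sym2 V → Bool) : Prop :=
  ∃ T₁ T₂ : G.Subgraph, IsMonoTree G φ T₁ ∧ IsMonoTree G φ T₂ ∧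
    Disjoint T₁.verts T₂.verts ∧ T₁.verts ∪ T₂.verts = Set.univ

/-- `G → Π₂`: every 2-colouring of the edges admits a partition of the vertex
set into the vertex sets of two monochromatic trees. -/
def ArrowPi2 (G : SimpleGraph V) : Prop :=
  ∀ φ : Sym2 V → Bool, MonoTreePartition2 G φ

/-- Partition of the vertex set into the vertex sets of `r` monochromatic
trees for an `r`-colouring `φ`. -/
def MonoTreePartitionR (G : SimpleGraph V) (r : ℕ) (φ : Sym2 V → Fin r) : Prop :=
  ∃ T : Fin r → G.Subgraph, (∀ i, IsMonoTree G φ (T i)) ∧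
    (Set.univ.PairwiseDisjoint fun i => (T i).verts) ∧ (⋃ i, (T i).verts) = Set.univ

/-- `G → Π_r`. -/
def ArrowPiR (G : SimpleGraph V) (r : ℕ) : Prop :=
  ∀ φ : Sym2 V → Fin r, MonoTreePartitionR G r φ

/-- There is a monochromatic `u`–`v` path. -/
def MonoPath (G : SimpleGraph V) (φ : Sym2 V → C) (u v : V) : Prop :=
  ∃ w : G.Walk u v, w.IsPath ∧ ∃ c : C, ∀ e ∈ w.edges, φ e = c

/-- The spanning subgraph of `G` consisting of the edges of colour `c`. -/
def colourGraph (G : SimpleGraph V) (φ : Sym2 V → Bool) (c : Bool) : SimpleGraph V :=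
  SimpleGraph.fromEdgeSet {e | e ∈ G.edgeSet ∧ φ e = c}

/-- The set `R^φ` (for `c = true`, i.e. red) resp. `B^φ` (for `c = false`,
i.e. blue) of vertices `v` with `d_c(v) > d(v)/3`. -/
def bigColourSet (G : SimpleGraph V) (φ : Sym2 V → Bool) (c : Bool) : Set V :=
  {v | (G.neighborSet v).ncard < 3 * ((colourGraph G φ c).neighborSet v).ncard}

/-- A colouring is extremal if there are distinct `r ∈ R^φ`, `b ∈ B^φ` with no
monochromatic `r`–`b` path. -/
def Extremal (G : SimpleGraph V) (φ : Sym2 V → Bool) : Prop :=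
  ∃ r ∈ bigColourSet G φ true, ∃ b ∈ bigColourSet G φ false,
    r ≠ b ∧ ¬ MonoPath G φ r b

/-- The number of edges of `G` with one endpoint in `U` and the other in `W`. -/
noncomputable def edgesBetween (G : SimpleGraph V) (U W : Set V) : ℕ :=
  {e ∈ G.edgeSet | ∃ u ∈ U, ∃ w ∈ W, e = s(u, w)}.ncard

/-- The number of edges of `G` with both endpoints in `A`. -/
noncomputable def edgesWithin (G : SimpleGraph V) (A : Set V) : ℕ :=
  {e ∈ G.edgeSet | ∀ v ∈ e, v ∈ A}.ncard

/-- The distribution of the binomial random graph `G(n,p)`: each potential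
edge appears independently with probability `p`. -/
noncomputable def gnp (n : ℕ) (p : ℝ) : Measure (Sym2 (Fin n) → Bool) :=
  Measure.pi fun _ => (PMF.bernoulli (min (Real.toNNReal p) 1) (min_le_right _ _)).toMeasure

/-- The graph encoded by an outcome `ω` of the edge indicators. -/
def graphOf {n : ℕ} (ω : Sym2 (Fin n) → Bool) : SimpleGraph (Fin n) :=
  SimpleGraph.fromEdgeSet {e | ω e = true}


open scoped Classical
def myRestrict {V : Type*} (G : SimpleGraph V) (A : Set V) : SimpleGraph V where
  Adj a b := G.Adj a b ∧ a ∈ A ∧ b ∈ A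
  symm := ⟨fun a b => by rintro ⟨h, ha, hb⟩; exact ⟨h.symm, hb, ha⟩⟩
  loopless := ⟨fun a => by rintro ⟨h, -⟩; exact G.loopless.irrefl a h⟩

lemma myRestrict_edgeSet {V : Type*} (G : SimpleGraph V) (A : Set V) :
    (myRestrict G A).edgeSet = {e ∈ G.edgeSet | ∀ v ∈ e, v ∈ A} := by
  ext e
  induction e using Sym2.ind with
  | _ a b =>
    simp only [SimpleGraph.mem_edgeSet, Set.mem_setOf_eq, Sym2.mem_iff]
    constructor
    · rintro ⟨h, ha, hb⟩
      exact ⟨h, fun v hv => by rcases hv with rfl | rfl <;> assumption⟩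
    · rintro ⟨h, hall⟩
      exact ⟨h, hall a (by left; rfl), hall b (by right; rfl)⟩

lemma sum_deg_le {V : Type*} [Fintype V] (G : SimpleGraph V) (U : Set V) :
    ∑ v ∈ (Set.toFinite U).toFinset, (myRestrict G U).degree v ≤ 2 * edgesWithin G U := by
  have h1 : ∑ v ∈ (Set.toFinite U).toFinset, (myRestrict G U).degree v
      ≤ ∑ v : V, (myRestrict G U).degree v :=
    Finset.sum_le_sum_of_subset (Finset.subset_univ _)
  have h2 : ∑ v : V, (myRestrict G U).degree v = 2 * (myRestrict G U).edgeFinset.card :=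
    SimpleGraph.sum_degrees_eq_twice_card_edges _
  have h3 : edgesWithin G U = (myRestrict G U).edgeFinset.card := by
    rw [edgesWithin, ← myRestrict_edgeSet, SimpleGraph.edgeFinset,
      Set.ncard_eq_toFinset_card']
  omega

lemma ncard_neighbor_le {V : Type*} [Fintype V] {G : SimpleGraph V} (H : G.Subgraph)
    (C : H.coe.ConnectedComponent) {v : V}
    (hv : v ∈ (Subtype.val '' C.supp : Set V)) :
    (H.neighborSet v).ncard ≤ (myRestrict G (Subtype.val '' C.supp)).degree v := by
  set U : Set V := Subtype.val '' C.supp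
  have hsub : H.neighborSet v ⊆ (myRestrict G U).neighborSet v := by
    intro w hw
    have hadj : H.Adj v w := hw
    obtain ⟨x, hx, hxv⟩ := id hv
    have hwm : w ∈ H.verts := hadj.snd_mem
    have hcoe : H.coe.Adj x ⟨w, hwm⟩ := by
      simp only [SimpleGraph.Subgraph.coe_adj]
      rw [hxv]; exact hadj
    have hwU : w ∈ U := by
      refine ⟨⟨w, hwm⟩, ?_, rfl⟩
      have : H.coe.connectedComponentMk ⟨w, hwm⟩ = H.coe.connectedComponentMk x :=
        SimpleGraph.ConnectedComponent.eq.mpr hcoe.symm.reachable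
      rw [SimpleGraph.ConnectedComponent.mem_supp_iff, this]
      exact hx
    exact ⟨(by rw [← hxv] at hadj ⊢; exact hadj.adj_sub), hv, hwU⟩
  calc (H.neighborSet v).ncard ≤ ((myRestrict G U).neighborSet v).ncard :=
        Set.ncard_le_ncard hsub (Set.toFinite _)
    _ = (myRestrict G U).degree v := by
        rw [Set.ncard_eq_toFinset_card', SimpleGraph.degree]
        congr 1


/-- Deterministic implication: if `2e(U) < p|U|² + εpn|U|`
for every non-empty `U`, then every non-empty subgraph `H` of minimum degree
at least `(1/2 + ε)pn` is connected, and each of its components has more than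
`n/2` vertices. -/
theorem stmt_12 (n : ℕ) (p ε : ℝ) (hp : 0 < p) (hε : 0 < ε) (G : SimpleGraph (Fin n))
    (hU : ∀ U : Set (Fin n), U.Nonempty →
      2 * (edgesWithin G U : ℝ) < p * U.ncard ^ 2 + ε * p * n * U.ncard) :
    ∀ H : G.Subgraph, H.verts.Nonempty →
      (∀ v ∈ H.verts, (1 / 2 + ε) * p * n ≤ ((H.neighborSet v).ncard : ℝ)) →
      H.coe.Connected ∧ ∀ C : H.coe.ConnectedComponent, (n : ℝ) / 2 < (C.supp.ncard : ℝ) := by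
  intro H hne hdeg
  have key : ∀ C : H.coe.ConnectedComponent, (n : ℝ) / 2 < (C.supp.ncard : ℝ) := by
    intro C
    set U : Set (Fin n) := Subtype.val '' C.supp with hUdef
    have hUcard : U.ncard = C.supp.ncard :=
      Set.ncard_image_of_injective _ Subtype.val_injective
    have hUne : U.Nonempty := by
      obtain ⟨v, hv⟩ := C.exists_rep
      exact ⟨v.val, v, by rw [SimpleGraph.ConnectedComponent.mem_supp_iff]; exact hv, rfl⟩
    have hdegU : ∀ v ∈ U, (1/2+ε)*p*n ≤ ((myRestrict G U).degree v : ℝ) := by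
      intro v hv
      have h1 := ncard_neighbor_le H C hv
      have hvH : v ∈ H.verts := by obtain ⟨x, -, rfl⟩ := hv; exact x.2
      calc (1/2+ε)*p*n ≤ ((H.neighborSet v).ncard : ℝ) := hdeg v hvH
        _ ≤ _ := by exact_mod_cast h1
    have hsum : (U.ncard : ℝ) * ((1/2+ε)*p*n) ≤ 2 * (edgesWithin G U : ℝ) := by
      have hle := sum_deg_le G U
      have hcard : (Set.toFinite U).toFinset.card = U.ncard :=
        (Set.ncard_eq_toFinset_card _ _).symm
      calc (U.ncard:ℝ) * ((1/2+ε)*p*n)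
          = ∑ _v ∈ (Set.toFinite U).toFinset, ((1/2+ε)*p*n) := by
            rw [Finset.sum_const, hcard, nsmul_eq_mul]
        _ ≤ ∑ v ∈ (Set.toFinite U).toFinset, ((myRestrict G U).degree v : ℝ) :=
            Finset.sum_le_sum (fun v hv => hdegU v ((Set.Finite.mem_toFinset _).mp hv))
        _ = ((∑ v ∈ (Set.toFinite U).toFinset, (myRestrict G U).degree v : ℕ) : ℝ) := by
            push_cast; rfl
        _ ≤ 2 * (edgesWithin G U : ℝ) := by exact_mod_cast hle
    have hUineq := hU U hUne
    have hUpos : (0:ℝ) < U.ncard := by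
      exact_mod_cast (Set.ncard_pos (Set.toFinite U)).mpr hUne
    rw [← hUcard]
    nlinarith [mul_pos hp hUpos]
  refine ⟨?_, key⟩
  have hnonempty : Nonempty ↑H.verts := hne.to_subtype
  refine ⟨fun x y => ?_⟩
  by_contra hr
  set Cx := H.coe.connectedComponentMk x with hCx
  set Cy := H.coe.connectedComponentMk y with hCy
  have hne' : Cx ≠ Cy := fun h => hr (SimpleGraph.ConnectedComponent.eq.mp h)
  have hdisj : Disjoint Cx.supp Cy.supp := by
    rw [Set.disjoint_left]
    intro z hzx hzy
    rw [SimpleGraph.ConnectedComponent.mem_supp_iff] at hzx hzy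
    exact hne' (hzx ▸ hzy ▸ rfl)
  have hcards : Cx.supp.ncard + Cy.supp.ncard ≤ n := by
    have h1 := Set.ncard_union_eq hdisj (Set.toFinite _) (Set.toFinite _)
    have h2 : (Cx.supp ∪ Cy.supp).ncard ≤ Nat.card ↑H.verts := by
      rw [← Set.ncard_univ]
      exact Set.ncard_le_ncard (Set.subset_univ _) (Set.toFinite _)
    have h3 : Nat.card ↑H.verts ≤ n := by
      calc Nat.card ↑H.verts = H.verts.ncard := (Nat.card_coe_set_eq _)
        _ ≤ (Set.univ : Set (Fin n)).ncard :=
            Set.ncard_le_ncard (Set.subset_univ _) (Set.toFinite _)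
        _ = n := by rw [Set.ncard_univ]; simp
    omega
  have k1 := key Cx
  have k2 := key Cy
  have : ((Cx.supp.ncard + Cy.supp.ncard : ℕ) : ℝ) ≤ (n : ℝ) := by exact_mod_cast hcards
  push_cast at this
  linarith


end MonochromaticTrees
end

section
/- Let G = (V, E) be a graph with no isolated vertices and let φ : E → {red, blue} be a 2-colouring such that R^φ ≠ ∅, B^φ ≠ ∅, and every two distinct vertices r ∈ R^φ and b ∈ B^φ are connected in G by a monochromatic path. Then either φ → Π₂, or there exist a connected component C_red of the graph (V, φ^{-1}(red)) and a connected component C_blue of the graph (V, φ^{-1}(blue)) such that V(C_red) ∪ V(C_blue) = V. -/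
open MeasureTheory Filter Topology SimpleGraph

namespace MonochromaticTrees

variable {V : Type*} {C : Type*}

/-- Deleting a non-bridge edge of a connected graph keeps it connected. -/
lemma connected_sdiff_of_not_bridge {H : SimpleGraph V} (hc : H.Connected) {v w : V}
    (hadj : H.Adj v w) (hbr : ¬ H.IsBridge s(v, w)) :
    (H \ fromEdgeSet {s(v, w)}).Connected := by
  classical
  set H' := H \ fromEdgeSet {s(v, w)} with hH'
  have hr : H'.Reachable v w := by
    rw [isBridge_iff] at hbr
    push_neg at hbr
    exact hbr
  have walkreach : ∀ {x y : V}, H.Walk x y → H'.Reachable x y := by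
    intro x y p
    induction p with
    | nil => exact Reachable.refl _
    | cons h q ih =>
      rename_i a m _ 
      refine Reachable.trans ?_ ih
      by_cases he : s(a, m) = s(v, w)
      · rcases Sym2.eq_iff.mp he with ⟨rfl, rfl⟩ | ⟨rfl, rfl⟩
        · exact hr
        · exact hr.symm
      · refine Adj.reachable ?_
        rw [hH', sdiff_adj, fromEdgeSet_adj]
        exact ⟨h, by simp [he]⟩
  haveI := hc.nonempty
  exact Connected.mk (fun x y => (hc x y).elim fun p => walkreach p)

/-- Every finite connected graph has a spanning tree. -/
lemma exists_spanning_tree {W : Type*} [Fintype W] (H : SimpleGraph W) (h : H.Connected) :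
    ∃ T : SimpleGraph W, T ≤ H ∧ T.IsTree := by
  classical
  suffices h' : ∀ (n : ℕ) (H : SimpleGraph W), H.edgeSet.ncard ≤ n → H.Connected →
      ∃ T : SimpleGraph W, T ≤ H ∧ T.IsTree from h' _ H le_rfl h
  intro n
  induction n with
  | zero =>
    intro H hn hc
    refine ⟨H, le_rfl, hc, ?_⟩
    have hemp : H.edgeSet = ∅ :=
      (Set.ncard_eq_zero (Set.toFinite _)).mp (Nat.le_zero.mp hn)
    have : H = ⊥ := edgeSet_eq_empty.mp hemp
    rw [this]
    exact isAcyclic_bot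
  | succ n ih =>
    intro H hn hc
    by_cases hac : H.IsAcyclic
    · exact ⟨H, le_rfl, hc, hac⟩
    · rw [isAcyclic_iff_forall_adj_isBridge] at hac
      push_neg at hac
      obtain ⟨v, w, hadj, hbr⟩ := hac
      have hc' := connected_sdiff_of_not_bridge hc hadj hbr
      have hedge : (H \ fromEdgeSet {s(v, w)}).edgeSet = H.edgeSet \ {s(v, w)} := by
        rw [edgeSet_sdiff, edgeSet_fromEdgeSet]
        ext e
        simp only [Set.mem_diff, Set.mem_singleton_iff, Set.mem_setOf_eq, not_and, not_not]
        constructor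
        · rintro ⟨he, h2⟩
          refine ⟨he, fun hee => ?_⟩
          exact absurd (h2 hee) (H.not_isDiag_of_mem_edgeSet (hee ▸ he))
        · rintro ⟨he, h2⟩
          exact ⟨he, fun hee => absurd hee h2⟩
      have hcard : (H \ fromEdgeSet {s(v, w)}).edgeSet.ncard ≤ n := by
        rw [hedge]
        have hmem : s(v, w) ∈ H.edgeSet := hadj
        have := Set.ncard_diff_singleton_lt_of_mem hmem (Set.toFinite _)
        omega
      obtain ⟨T, hT, ht⟩ := ih _ hcard hc'
      exact ⟨T, hT.trans sdiff_le, ht⟩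


lemma colourGraph_adj {G : SimpleGraph V} {φ : Sym2 V → Bool} {c : Bool} {u v : V} :
    (colourGraph G φ c).Adj u v ↔ G.Adj u v ∧ φ s(u, v) = c := by
  rw [colourGraph, fromEdgeSet_adj]
  constructor
  · rintro ⟨⟨h1, h2⟩, -⟩
    exact ⟨h1, h2⟩
  · rintro ⟨h1, h2⟩
    exact ⟨⟨h1, h2⟩, h1.ne⟩

lemma reachable_induce_of_walk {K : SimpleGraph V} {s : Set V} :
    ∀ {u v : V} (p : K.Walk u v), (∀ w ∈ p.support, w ∈ s) → ∀ (hu : u ∈ s) (hv : v ∈ s),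
      (K.induce s).Reachable ⟨u, hu⟩ ⟨v, hv⟩ := by
  intro u v p
  induction p with
  | nil => intro _ hu hv; exact Reachable.refl _
  | cons h q ih =>
    rename_i a m b
    intro hs hu hv
    have hm : m ∈ s := hs m (by simp [Walk.support_cons])
    have hadj : (K.induce s).Adj ⟨a, hu⟩ ⟨m, hm⟩ := h
    exact hadj.reachable.trans (ih (fun w hw => hs w (by simp [Walk.support_cons, hw])) hm hv)

lemma induce_supp_connected (K : SimpleGraph V) (D : K.ConnectedComponent) :
    (K.induce D.supp).Connected := by
  classical
  obtain ⟨x, hx⟩ := D.exists_rep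
  have hxs : x ∈ D.supp := by rwa [ConnectedComponent.mem_supp_iff]
  haveI : Nonempty ↥D.supp := ⟨⟨x, hxs⟩⟩
  refine Connected.mk ?_
  rintro ⟨u, hu⟩ ⟨v, hv⟩
  rw [ConnectedComponent.mem_supp_iff] at hu hv
  have hreach : K.Reachable u v := ConnectedComponent.eq.mp (hu.trans hv.symm)
  obtain ⟨p⟩ := hreach
  refine reachable_induce_of_walk p (fun w hw => ?_) _ _
  rw [ConnectedComponent.mem_supp_iff, ← hu]
  exact ConnectedComponent.eq.mpr (p.takeUntil w hw).reachable.symm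

lemma comp_tree [Fintype V] (G : SimpleGraph V) (φ : Sym2 V → Bool) (c : Bool)
    (D : (colourGraph G φ c).ConnectedComponent) :
    ∃ T : G.Subgraph, IsMonoTree G φ T ∧ T.verts = D.supp := by
  classical
  obtain ⟨Tr, hle, hTree⟩ :=
    exists_spanning_tree ((colourGraph G φ c).induce D.supp) (induce_supp_connected _ D)
  refine ⟨{ verts := D.supp
            Adj := fun u v => ∃ (hu : u ∈ D.supp) (hv : v ∈ D.supp), Tr.Adj ⟨u, hu⟩ ⟨v, hv⟩
            adj_sub := ?_
            edge_vert := ?_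
            symm := ?_ }, ⟨?_, ?_⟩, rfl⟩
  · rintro u v ⟨hu, hv, h⟩
    exact (colourGraph_adj.mp (hle h)).1
  · rintro u v ⟨hu, hv, h⟩
    exact hu
  · constructor
    rintro u v ⟨hu, hv, h⟩
    exact ⟨hv, hu, h.symm⟩
  · refine Or.inr ?_
    have hcoe : ∀ (T : SimpleGraph ↥D.supp), T = Tr → T.IsTree := fun T hT => hT ▸ hTree
    apply hcoe
    ext ⟨u, hu⟩ ⟨v, hv⟩
    simp only [Subgraph.coe_adj]
    constructor
    · rintro ⟨hu', hv', h⟩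
      exact h
    · intro h
      exact ⟨hu, hv, h⟩
  · refine ⟨c, fun e he => ?_⟩
    induction e using Sym2.ind with
    | _ u v =>
      obtain ⟨hu, hv, h⟩ := Subgraph.mem_edgeSet.mp he
      exact (colourGraph_adj.mp (hle h)).2


lemma monoPath_reachable {G : SimpleGraph V} {φ : Sym2 V → Bool} {u v : V}
    (h : MonoPath G φ u v) : ∃ c : Bool, (colourGraph G φ c).Reachable u v := by
  obtain ⟨w, -, c, hc⟩ := h
  refine ⟨c, ⟨w.transfer (colourGraph G φ c) fun e he => ?_⟩⟩
  have heG : e ∈ G.edgeSet := w.edges_subset_edgeSet he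
  rw [colourGraph, edgeSet_fromEdgeSet]
  exact ⟨⟨heG, hc e he⟩, G.not_isDiag_of_mem_edgeSet heG⟩

lemma supp_disjoint {K : SimpleGraph V} {D₁ D₂ : K.ConnectedComponent} (h : D₁ ≠ D₂) :
    Disjoint D₁.supp D₂.supp := by
  rw [Set.disjoint_left]
  intro v h1 h2
  rw [ConnectedComponent.mem_supp_iff] at h1 h2
  exact h (h1 ▸ h2 ▸ rfl)

lemma mem_bigColourSet_cover [Fintype V] (G : SimpleGraph V) (φ : Sym2 V → Bool)
    (hiso : ∀ v : V, (G.neighborSet v).Nonempty) (v : V) :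
    v ∈ bigColourSet G φ true ∨ v ∈ bigColourSet G φ false := by
  classical
  have hN : G.neighborSet v =
      (colourGraph G φ true).neighborSet v ∪ (colourGraph G φ false).neighborSet v := by
    ext u
    simp only [mem_neighborSet, Set.mem_union, colourGraph_adj]
    constructor
    · intro h
      rcases Bool.eq_false_or_eq_true (φ s(v, u)) with h2 | h2
      · exact Or.inl ⟨h, h2⟩
      · exact Or.inr ⟨h, h2⟩
    · rintro (⟨h, -⟩ | ⟨h, -⟩) <;> exact h
  have hdisj : Disjoint ((colourGraph G φ true).neighborSet v)
      ((colourGraph G φ false).neighborSet v) := by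
    rw [Set.disjoint_left]
    intro u h1 h2
    rw [mem_neighborSet, colourGraph_adj] at h1 h2
    simp [h1.2] at h2
  have hcard : (G.neighborSet v).ncard =
      ((colourGraph G φ true).neighborSet v).ncard +
        ((colourGraph G φ false).neighborSet v).ncard := by
    rw [hN]
    exact Set.ncard_union_eq hdisj (Set.toFinite _) (Set.toFinite _)
  have hpos : 0 < (G.neighborSet v).ncard := (Set.ncard_pos (Set.toFinite _)).mpr (hiso v)
  rw [bigColourSet, bigColourSet, Set.mem_setOf_eq, Set.mem_setOf_eq]
  omega

lemma key [Fintype V] (G : SimpleGraph V) (φ : Sym2 V → Bool) (c : Bool)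
    (Rs Bs : Set V) (hdisj : ∀ v, v ∈ Rs → v ∈ Bs → False)
    (hunion : ∀ v, v ∈ Rs ∨ v ∈ Bs)
    (hp : ∀ r ∈ Rs, ∀ b ∈ Bs, ∃ c' : Bool, (colourGraph G φ c').Reachable r b)
    (a b : V) (ha : a ∈ Rs) (hb : b ∈ Bs)
    (hreach : (colourGraph G φ c).Reachable a b) :
    MonoTreePartition2 G φ ∨
      ∃ (C1 : (colourGraph G φ c).ConnectedComponent)
        (C2 : (colourGraph G φ (!c)).ConnectedComponent),
        C1.supp ∪ C2.supp = Set.univ := by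
  classical
  set H := colourGraph G φ c with hH
  set K := colourGraph G φ (!c) with hK
  set Cr := H.connectedComponentMk a with hCr
  set D1 := K.connectedComponentMk a with hD1
  set D2 := K.connectedComponentMk b with hD2
  have bool_cases : ∀ c' : Bool, c' = c ∨ c' = !c := by
    intro c'; cases c <;> cases c' <;> simp
  have hbC : b ∈ Cr.supp := by
    rw [ConnectedComponent.mem_supp_iff]
    exact ConnectedComponent.eq.mpr hreach.symm
  have key1 : ∀ v ∈ Bs, v ∉ Cr.supp → v ∈ D1.supp := by
    intro v hv hvC
    obtain ⟨c', hr⟩ := hp a ha v hv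
    rcases bool_cases c' with rfl | rfl
    · exact absurd (by rw [ConnectedComponent.mem_supp_iff]; exact ConnectedComponent.eq.mpr hr.symm) hvC
    · rw [ConnectedComponent.mem_supp_iff]
      exact ConnectedComponent.eq.mpr hr.symm
  have key2 : ∀ v ∈ Rs, v ∉ Cr.supp → v ∈ D2.supp := by
    intro v hv hvC
    obtain ⟨c', hr⟩ := hp v hv b hb
    rcases bool_cases c' with rfl | rfl
    · refine absurd ?_ hvC
      rw [ConnectedComponent.mem_supp_iff]
      rw [ConnectedComponent.mem_supp_iff] at hbC
      exact (ConnectedComponent.eq.mpr hr).trans hbC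
    · rw [ConnectedComponent.mem_supp_iff]
      exact ConnectedComponent.eq.mpr hr
  by_cases hD : D1 = D2
  · right
    refine ⟨Cr, D1, Set.eq_univ_of_forall fun v => ?_⟩
    by_cases hvC : v ∈ Cr.supp
    · exact Or.inl hvC
    · rcases hunion v with hv | hv
      · exact Or.inr (hD ▸ key2 v hv hvC)
      · exact Or.inr (key1 v hv hvC)
  by_cases hXR : ∀ v ∈ Rs, v ∈ Cr.supp
  · right
    refine ⟨Cr, D1, Set.eq_univ_of_forall fun v => ?_⟩
    by_cases hvC : v ∈ Cr.supp
    · exact Or.inl hvC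
    · rcases hunion v with hv | hv
      · exact absurd (hXR v hv) hvC
      · exact Or.inr (key1 v hv hvC)
  by_cases hXB : ∀ v ∈ Bs, v ∈ Cr.supp
  · right
    refine ⟨Cr, D2, Set.eq_univ_of_forall fun v => ?_⟩
    by_cases hvC : v ∈ Cr.supp
    · exact Or.inl hvC
    · rcases hunion v with hv | hv
      · exact Or.inr (key2 v hv hvC)
      · exact absurd (hXB v hv) hvC
  · push_neg at hXR hXB
    obtain ⟨x, hxR, hxC⟩ := hXR
    obtain ⟨y, hyB, hyC⟩ := hXB
    have hx2 : x ∈ D2.supp := key2 x hxR hxC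
    have hy1 : y ∈ D1.supp := key1 y hyB hyC
    have cover : ∀ v, v ∈ D1.supp ∨ v ∈ D2.supp := by
      intro v
      rcases hunion v with hv | hv
      · by_cases hvC : v ∈ Cr.supp
        · obtain ⟨c', hr⟩ := hp v hv y hyB
          rcases bool_cases c' with rfl | rfl
          · refine absurd ?_ hyC
            rw [ConnectedComponent.mem_supp_iff] at hvC ⊢
            exact (ConnectedComponent.eq.mpr hr.symm).trans hvC
          · left
            rw [ConnectedComponent.mem_supp_iff] at hy1 ⊢
            exact (ConnectedComponent.eq.mpr hr).trans hy1
        · exact Or.inr (key2 v hv hvC)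
      · by_cases hvC : v ∈ Cr.supp
        · obtain ⟨c', hr⟩ := hp x hxR v hv
          rcases bool_cases c' with rfl | rfl
          · refine absurd ?_ hxC
            rw [ConnectedComponent.mem_supp_iff] at hvC ⊢
            exact (ConnectedComponent.eq.mpr hr).trans hvC
          · right
            rw [ConnectedComponent.mem_supp_iff] at hx2 ⊢
            exact (ConnectedComponent.eq.mpr hr.symm).trans hx2
        · exact Or.inl (key1 v hv hvC)
    left
    obtain ⟨T1, hT1, hv1⟩ := comp_tree G φ (!c) D1
    obtain ⟨T2, hT2, hv2⟩ := comp_tree G φ (!c) D2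
    refine ⟨T1, T2, hT1, hT2, ?_, ?_⟩
    · rw [hv1, hv2]
      exact supp_disjoint hD
    · rw [hv1, hv2]
      exact Set.eq_univ_of_forall fun v => cover v


/-- If `G` has no isolated vertices, `R^φ` and `B^φ` are
non-empty, and all distinct `r ∈ R^φ`, `b ∈ B^φ` are joined by monochromatic
paths, then either `φ → Π₂`, or a red component and a blue component together
cover all vertices. -/
theorem stmt_15 {V : Type*} [Fintype V] (G : SimpleGraph V) (φ : Sym2 V → Bool)
    (hiso : ∀ v : V, (G.neighborSet v).Nonempty)
    (hR : (bigColourSet G φ true).Nonempty) (hB : (bigColourSet G φ false).Nonempty)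
    (hpath : ∀ r ∈ bigColourSet G φ true, ∀ b ∈ bigColourSet G φ false,
      r ≠ b → MonoPath G φ r b) :
    MonoTreePartition2 G φ ∨
      ∃ (Cr : (colourGraph G φ true).ConnectedComponent)
        (Cb : (colourGraph G φ false).ConnectedComponent),
        Cr.supp ∪ Cb.supp = Set.univ := by
  classical
  have hcov := mem_bigColourSet_cover G φ hiso
  by_cases hint : ∃ x, x ∈ bigColourSet G φ true ∧ x ∈ bigColourSet G φ false
  · obtain ⟨x, hxR, hxB⟩ := hint
    right
    refine ⟨(colourGraph G φ true).connectedComponentMk x,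
      (colourGraph G φ false).connectedComponentMk x, Set.eq_univ_of_forall fun v => ?_⟩
    by_cases hvx : v = x
    · subst hvx
      exact Or.inl (by rw [ConnectedComponent.mem_supp_iff])
    · have hmp : ∃ c : Bool, (colourGraph G φ c).Reachable x v := by
        rcases hcov v with hv | hv
        · obtain ⟨c, hr⟩ := monoPath_reachable (hpath v hv x hxB hvx)
          exact ⟨c, hr.symm⟩
        · exact monoPath_reachable (hpath x hxR v hv (Ne.symm hvx))
      obtain ⟨c, hr⟩ := hmp
      cases c with
      | false =>
        right
        rw [ConnectedComponent.mem_supp_iff]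
        exact ConnectedComponent.eq.mpr hr.symm
      | true =>
        left
        rw [ConnectedComponent.mem_supp_iff]
        exact ConnectedComponent.eq.mpr hr.symm
  · push_neg at hint
    obtain ⟨r₀, hr₀⟩ := hR
    obtain ⟨b₀, hb₀⟩ := hB
    have hne : r₀ ≠ b₀ := fun h => hint r₀ hr₀ (h ▸ hb₀)
    obtain ⟨c, hrc⟩ := monoPath_reachable (hpath r₀ hr₀ b₀ hb₀ hne)
    cases c with
    | true =>
      have h := key G φ true (bigColourSet G φ true) (bigColourSet G φ false)
        (fun v h1 h2 => hint v h1 h2) hcov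
        (fun r hr b hb => monoPath_reachable (hpath r hr b hb (fun he => hint r hr (he ▸ hb))))
        r₀ b₀ hr₀ hb₀ hrc
      rcases h with h | ⟨C1, C2, hC⟩
      · exact Or.inl h
      · exact Or.inr ⟨C1, C2, hC⟩
    | false =>
      have h := key G φ false (bigColourSet G φ false) (bigColourSet G φ true)
        (fun v h1 h2 => hint v h2 h1) (fun v => (hcov v).symm)
        (fun b hb r hr =>
          let ⟨c', h'⟩ := monoPath_reachable (hpath r hr b hb (fun he => hint r hr (he ▸ hb)))
          ⟨c', h'.symm⟩)
        b₀ r₀ hb₀ hr₀ hrc.symm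
      rcases h with h | ⟨C1, C2, hC⟩
      · exact Or.inl h
      · exact Or.inr ⟨C2, C1, by rw [Set.union_comm]; exact hC⟩


end MonochromaticTrees
end

section
/- Let G = (V, E) be a graph containing four pairwise non-adjacent vertices r, b, g, z with N(r) ∩ N(b) ∩ N(g) ∩ N(z) = ∅. Then there exists a 3-colouring φ of E such that there is no partition of V into the vertex sets of three monochromatic trees; in particular G does not satisfy G → Π₃. -/
open MeasureTheory Filter Topology SimpleGraph

namespace MonochromaticTrees

variable {V : Type*} {C : Type*}

def SmatP : Fin 4 → Fin 3 → Fin 4 := ![![1,2,3], ![0,2,3], ![0,1,3], ![0,2,1]]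

lemma SmatP_pair : ∀ j k : Fin 4, ∃ c, SmatP j c = SmatP k c := by decide

lemma SmatP_hit : ∀ i j : Fin 4, i ≠ j → ∃ c, SmatP j c = i := by decide

open Classical in
noncomputable def mcode {V : Type*} (G : SimpleGraph V) (r b g z : V) (v : V) : Fin 4 :=
  if ¬ G.Adj v r then 0 else if ¬ G.Adj v b then 1 else if ¬ G.Adj v g then 2 else 3

open Classical in
noncomputable def fcode {V : Type*} (G : SimpleGraph V) (r b g z : V) (v : V) : Fin 3 → Fin 4 :=
  if v = r then fun _ => 0 else if v = b then fun _ => 1 else if v = g then fun _ => 2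
  else if v = z then fun _ => 3 else SmatP (mcode G r b g z v)

noncomputable def phi' {V : Type*} (G : SimpleGraph V) (r b g z : V) (x y : V) : Fin 3 :=
  if h : (Finset.univ.filter fun c => fcode G r b g z x c = fcode G r b g z y c).Nonempty
  then (Finset.univ.filter fun c => fcode G r b g z x c = fcode G r b g z y c).min' h else 0

lemma phi'_symm {V : Type*} (G : SimpleGraph V) (r b g z : V) (x y : V) :
    phi' G r b g z x y = phi' G r b g z y x := by
  have hd : (Finset.univ.filter fun c => fcode G r b g z x c = fcode G r b g z y c)
      = (Finset.univ.filter fun c => fcode G r b g z y c = fcode G r b g z x c) := by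
    ext c; simp [eq_comm]
  unfold phi'
  rw [hd]

noncomputable def phi {V : Type*} (G : SimpleGraph V) (r b g z : V) : Sym2 V → Fin 3 :=
  Sym2.lift ⟨fun x y => phi' G r b g z x y, fun x y => phi'_symm G r b g z x y⟩

lemma phi_spec {V : Type*} (G : SimpleGraph V) (r b g z : V) (x y : V)
    (hne : ∃ c, fcode G r b g z x c = fcode G r b g z y c) (c : Fin 3)
    (hcol : phi G r b g z s(x, y) = c) :
    fcode G r b g z x c = fcode G r b g z y c := by
  obtain ⟨c0, hc0⟩ := hne
  have h : (Finset.univ.filter fun c => fcode G r b g z x c = fcode G r b g z y c).Nonempty :=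
    ⟨c0, Finset.mem_filter.mpr ⟨Finset.mem_univ _, hc0⟩⟩
  have hmem := Finset.min'_mem _ h
  have hval : phi G r b g z s(x, y)
      = (Finset.univ.filter fun c => fcode G r b g z x c = fcode G r b g z y c).min' h := by
    simp [phi, phi', h]
  rw [hval] at hcol
  rw [← hcol]
  exact (Finset.mem_filter.mp hmem).2


/-- If `G` contains four pairwise non-adjacent vertices
`r, b, g, z` with `N(r) ∩ N(b) ∩ N(g) ∩ N(z) = ∅`, then some 3-colouring of
the edges admits no partition of the vertex set into three monochromatic
trees; in particular `G ↛ Π₃`. -/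
theorem stmt_19 {V : Type*} [Fintype V] (G : SimpleGraph V) (r b g z : V)
    (hrb : r ≠ b) (hrg : r ≠ g) (hrz : r ≠ z) (hbg : b ≠ g) (hbz : b ≠ z) (hgz : g ≠ z)
    (hrb' : ¬ G.Adj r b) (hrg' : ¬ G.Adj r g) (hrz' : ¬ G.Adj r z)
    (hbg' : ¬ G.Adj b g) (hbz' : ¬ G.Adj b z) (hgz' : ¬ G.Adj g z)
    (hN : G.neighborSet r ∩ G.neighborSet b ∩ G.neighborSet g ∩ G.neighborSet z = ∅) :
    (∃ φ : Sym2 V → Fin 3, ¬ MonoTreePartitionR G 3 φ) ∧ ¬ ArrowPiR G 3 := by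
  classical
  have hzadj : ∀ v, G.Adj v r → G.Adj v b → G.Adj v g → ¬ G.Adj v z := by
    intro v h1 h2 h3 h4
    have hv : v ∈ G.neighborSet r ∩ G.neighborSet b ∩ G.neighborSet g ∩ G.neighborSet z :=
      ⟨⟨⟨h1.symm, h2.symm⟩, h3.symm⟩, h4.symm⟩
    rw [hN] at hv; exact hv
  have hmc : ∀ v, ¬ G.Adj v (![r, b, g, z] (mcode G r b g z v)) := by
    intro v
    unfold mcode
    by_cases h1 : G.Adj v r
    · rw [if_neg (not_not.mpr h1)]
      by_cases h2 : G.Adj v b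
      · rw [if_neg (not_not.mpr h2)]
        by_cases h3 : G.Adj v g
        · rw [if_neg (not_not.mpr h3)]
          simpa using hzadj v h1 h2 h3
        · rw [if_pos h3]; simpa using h3
      · rw [if_pos h2]; simpa using h2
    · rw [if_pos h1]; simpa using h1
  have hm0 : ∀ v, G.Adj v r → mcode G r b g z v ≠ 0 := by
    intro v h hcon; have h' := hmc v; rw [hcon] at h'; simp at h'; exact h' h
  have hm1 : ∀ v, G.Adj v b → mcode G r b g z v ≠ 1 := by
    intro v h hcon; have h' := hmc v; rw [hcon] at h'; simp at h'; exact h' h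
  have hm2 : ∀ v, G.Adj v g → mcode G r b g z v ≠ 2 := by
    intro v h hcon; have h' := hmc v; rw [hcon] at h'; simp at h'; exact h' h
  have hm3 : ∀ v, G.Adj v z → mcode G r b g z v ≠ 3 := by
    intro v h hcon; have h' := hmc v; rw [hcon] at h'; simp at h'; exact h' h
  have hfr : fcode G r b g z r = fun _ => 0 := by simp [fcode]
  have hfb : fcode G r b g z b = fun _ => 1 := by simp [fcode, Ne.symm hrb]
  have hfg : fcode G r b g z g = fun _ => 2 := by simp [fcode, Ne.symm hrg, Ne.symm hbg]
  have hfz : fcode G r b g z z = fun _ => 3 := by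
    simp [fcode, Ne.symm hrz, Ne.symm hbz, Ne.symm hgz]
  have hfn : ∀ v, v ≠ r → v ≠ b → v ≠ g → v ≠ z →
      fcode G r b g z v = SmatP (mcode G r b g z v) := by
    intro v h1 h2 h3 h4; simp [fcode, h1, h2, h3, h4]
  have key : ∀ x y, G.Adj x y → ∃ c, fcode G r b g z x c = fcode G r b g z y c := by
    intro x y hxy
    by_cases hx : x = r ∨ x = b ∨ x = g ∨ x = z
    · by_cases hy : y = r ∨ y = b ∨ y = g ∨ y = z
      · exfalso
        rcases hx with rfl | rfl | rfl | rfl <;> rcases hy with rfl | rfl | rfl | rfl <;>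
          first
            | exact G.irrefl hxy
            | exact hrb' hxy | exact hrg' hxy | exact hrz' hxy
            | exact hbg' hxy | exact hbz' hxy | exact hgz' hxy
            | exact hrb' hxy.symm | exact hrg' hxy.symm | exact hrz' hxy.symm
            | exact hbg' hxy.symm | exact hbz' hxy.symm | exact hgz' hxy.symm
      · push_neg at hy
        obtain ⟨hy1, hy2, hy3, hy4⟩ := hy
        rw [hfn y hy1 hy2 hy3 hy4]
        rcases hx with rfl | rfl | rfl | rfl
        · rw [hfr]
          obtain ⟨c, hc⟩ := SmatP_hit 0 (mcode G x b g z y) (Ne.symm (hm0 y hxy.symm))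
          exact ⟨c, hc.symm⟩
        · rw [hfb]
          obtain ⟨c, hc⟩ := SmatP_hit 1 (mcode G r x g z y) (Ne.symm (hm1 y hxy.symm))
          exact ⟨c, hc.symm⟩
        · rw [hfg]
          obtain ⟨c, hc⟩ := SmatP_hit 2 (mcode G r b x z y) (Ne.symm (hm2 y hxy.symm))
          exact ⟨c, hc.symm⟩
        · rw [hfz]
          obtain ⟨c, hc⟩ := SmatP_hit 3 (mcode G r b g x y) (Ne.symm (hm3 y hxy.symm))
          exact ⟨c, hc.symm⟩
    · push_neg at hx
      obtain ⟨hx1, hx2, hx3, hx4⟩ := hx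
      rw [hfn x hx1 hx2 hx3 hx4]
      by_cases hy : y = r ∨ y = b ∨ y = g ∨ y = z
      · rcases hy with rfl | rfl | rfl | rfl
        · rw [hfr]
          exact SmatP_hit 0 (mcode G y b g z x) (Ne.symm (hm0 x hxy))
        · rw [hfb]
          exact SmatP_hit 1 (mcode G r y g z x) (Ne.symm (hm1 x hxy))
        · rw [hfg]
          exact SmatP_hit 2 (mcode G r b y z x) (Ne.symm (hm2 x hxy))
        · rw [hfz]
          exact SmatP_hit 3 (mcode G r b g y x) (Ne.symm (hm3 x hxy))
      · push_neg at hy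
        obtain ⟨hy1, hy2, hy3, hy4⟩ := hy
        rw [hfn y hy1 hy2 hy3 hy4]
        exact SmatP_pair _ _
  have hstep : ∀ x y (c : Fin 3), G.Adj x y → phi G r b g z s(x, y) = c →
      fcode G r b g z x c = fcode G r b g z y c :=
    fun x y c hxy hcol => phi_spec G r b g z x y (key x y hxy) c hcol
  have main : ¬ MonoTreePartitionR G 3 (phi G r b g z) := by
    rintro ⟨T, hT, hdisj, hcover⟩
    set sp : Fin 4 → V := ![r, b, g, z] with hsp
    have hmem : ∀ i : Fin 4, ∃ t : Fin 3, sp i ∈ (T t).verts := by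
      intro i
      have h : sp i ∈ ⋃ t, (T t).verts := by rw [hcover]; trivial
      exact Set.mem_iUnion.mp h
    choose idx hidx using hmem
    obtain ⟨a, a', hane, heq⟩ := Fintype.exists_ne_map_eq_of_card_lt idx (by simp)
    obtain ⟨htree, c, hc⟩ := hT (idx a)
    have hu : sp a ∈ (T (idx a)).verts := hidx a
    have hv : sp a' ∈ (T (idx a)).verts := by rw [heq]; exact hidx a'
    rcases htree with h0 | ht
    · rw [h0] at hu; exact hu
    obtain ⟨w⟩ := ht.isConnected.preconnected ⟨sp a, hu⟩ ⟨sp a', hv⟩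
    have hwalk : ∀ (p q : (T (idx a)).verts) (w : (T (idx a)).coe.Walk p q),
        fcode G r b g z p.1 c = fcode G r b g z q.1 c := by
      intro p q w
      induction w with
      | nil => rfl
      | cons h w ih =>
        have hadj : (T (idx a)).Adj _ _ := h
        have hGadj := (T (idx a)).adj_sub hadj
        have hedge : _ ∈ (T (idx a)).edgeSet := (Subgraph.mem_edgeSet).mpr hadj
        exact (hstep _ _ c hGadj (hc _ hedge)).trans ih
    have hfc : ∀ i : Fin 4, fcode G r b g z (sp i) = fun _ => i := by
      intro i
      fin_cases i <;>
        simp [hsp, fcode, Ne.symm hrb, Ne.symm hrg, Ne.symm hrz, Ne.symm hbg,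
          Ne.symm hbz, Ne.symm hgz]
    have hend := hwalk _ _ w
    rw [hfc a, hfc a'] at hend
    exact hane (by simpa using hend)
  exact ⟨⟨phi G r b g z, main⟩, fun hA => main (hA _)⟩


end MonochromaticTrees
end
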